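/- For all real δ ∈ (0,1) with log(1/δ) ≥ 2 and all real p with 2 ≤ p ≤ log(1/δ), one has δ^{1/p} ≤ (1/√(2e))·√(p/log(1/δ)). -/

import Mathlib

/-- For `δ ∈ (0,1)` with `log(1/δ) ≥ 2` and `2 ≤ p ≤ log(1/δ)`,
`δ^(1/p) ≤ (1/√(2e))·√(p/log(1/δ))`. -/
theorem stmt3 (δ p : ℝ) (hδ : 0 < δ) (hδ1 : δ < 1)
    (hL : 2 ≤ Real.log (1 / δ)) (hp2 : 2 ≤ p) (hpL : p ≤ Real.log (1 / δ)) :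
    δ ^ (1 / p) ≤ (1 / Real.sqrt (2 * Real.exp 1)) * Real.sqrt (p / Real.log (1 / δ)) := by
  set L := Real.log (1 / δ) with hLdef
  have hL0 : (0:ℝ) < L := lt_of_lt_of_le two_pos hL
  have hp0 : (0:ℝ) < p := lt_of_lt_of_le two_pos hp2
  have hlogδ : Real.log δ = -L := by
    rw [hLdef, one_div, Real.log_inv]; ring
  have hlhs : δ ^ (1 / p) = Real.exp (-(L / p)) := by
    rw [Real.rpow_def_of_pos hδ, hlogδ]; ring_nf
  set t := L / p with htdef
  have ht1 : (1:ℝ) ≤ t := (one_le_div hp0).mpr hpL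
  have ht0 : (0:ℝ) < t := lt_of_lt_of_le one_pos ht1
  have hE : (0:ℝ) < Real.exp 1 := Real.exp_pos 1
  have key : Real.exp (-(2 * t)) * (2 * Real.exp 1 * t) ≤ 1 := by
    have h1 : t ≤ Real.exp (t - 1) := by
      have := Real.add_one_le_exp (t - 1); linarith
    have h2 : (2:ℝ) ≤ Real.exp t := by
      have he1 : (2:ℝ) ≤ Real.exp 1 := by
        have := Real.add_one_le_exp (1:ℝ); linarith
      exact he1.trans (Real.exp_le_exp.mpr ht1)
    have h3 : 2 * Real.exp 1 * t ≤ Real.exp (2 * t) := by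
      calc 2 * Real.exp 1 * t ≤ 2 * Real.exp 1 * Real.exp (t - 1) := by
            nlinarith
        _ = 2 * Real.exp t := by rw [mul_assoc, ← Real.exp_add]; norm_num
        _ ≤ Real.exp t * Real.exp t := by nlinarith [Real.exp_pos t]
        _ = Real.exp (2 * t) := by rw [← Real.exp_add]; ring_nf
    calc Real.exp (-(2 * t)) * (2 * Real.exp 1 * t)
        ≤ Real.exp (-(2 * t)) * Real.exp (2 * t) :=
          mul_le_mul_of_nonneg_left h3 (Real.exp_pos _).le
      _ = 1 := by rw [← Real.exp_add]; simp
  have hexp2 : Real.exp (-(2 * t)) ≤ p / L / (2 * Real.exp 1) := by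
    have hPL : p / L = 1 / t := by
      field_simp [htdef]
      rw [htdef]; field_simp [hp0.ne']
    rw [hPL]
    rw [div_div, le_div_iff₀ (by positivity)]
    nlinarith [key]
  have hRHS : (1 / Real.sqrt (2 * Real.exp 1)) * Real.sqrt (p / L)
      = Real.sqrt (p / L / (2 * Real.exp 1)) := by
    rw [one_div, ← Real.sqrt_inv, ← Real.sqrt_mul (by positivity)]
    congr 1; ring
  rw [hlhs, hRHS]
  refine (Real.le_sqrt (Real.exp_pos _).le (by positivity)).mpr ?_
  calc Real.exp (-t) ^ 2 = Real.exp (-(2 * t)) := by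
        rw [sq, ← Real.exp_add]; ring_nf
    _ ≤ p / L / (2 * Real.exp 1) := hexp2
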